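/- Let s ∈ (0,1) and (a_n)_{n≥0} a real sequence with |a_n| ≤ C (n!)^s / Rⁿ for some C, R > 0. Then f(x) = Σ_{n≥0} a_n xⁿ/n! defines an entire function which is Gevrey of order s on every interval [-l, l], with |f^{(m)}(x)| ≤ C (Σ_{k≥0} (2^s l)^k/(R^k (k!)^{1-s})) · 2^{sm}/R^m · (m!)^s for all m ∈ ℕ and x ∈ [-l,l]. -/

import Mathlib

open Filter Real

/-- Ratio-test summability workhorse. -/
private lemma aux_summable {s R : ℝ} (hs0 : 0 < s) (hs1 : s < 1) (hR : 0 < R) (M : ℕ) (t : ℝ) :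
    Summable (fun n : ℕ => t ^ n * (((n + M).factorial : ℝ)) ^ s / (R ^ n * (n.factorial : ℝ))) := by
  set F : ℕ → ℝ := fun n => t ^ n * (((n + M).factorial : ℝ)) ^ s / (R ^ n * (n.factorial : ℝ))
  have habs : ∀ k : ℕ, ‖F k‖ = |t| ^ k * (((k + M).factorial : ℝ)) ^ s / (R ^ k * (k.factorial : ℝ)) := by
    intro k
    have h1 : (0:ℝ) < (((k + M).factorial : ℝ)) ^ s := rpow_pos_of_pos (by positivity) s
    have h2 : (0:ℝ) < R ^ k * (k.factorial : ℝ) := by positivity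
    rw [Real.norm_eq_abs, abs_div, abs_mul, abs_pow, abs_of_pos h1, abs_of_pos h2]
  apply summable_of_ratio_norm_eventually_le (r := 1/2) (by norm_num)
  have hK : Tendsto (fun n : ℕ => (|t| * ((M:ℝ)+1) ^ s / R) * ((n:ℝ)+1) ^ (-(1-s)))
      atTop (nhds ((|t| * ((M:ℝ)+1) ^ s / R) * 0)) := by
    apply Tendsto.const_mul
    exact (tendsto_rpow_neg_atTop (by linarith)).comp
      (tendsto_atTop_add_const_right atTop 1 tendsto_natCast_atTop_atTop)
  rw [mul_zero] at hK
  filter_upwards [hK.eventually_le_const (show (0:ℝ) < 1/2 by norm_num)] with n hn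
  have hnp : (0:ℝ) < (n:ℝ) + 1 := by positivity
  have hfac : (((n + 1 + M).factorial : ℕ) : ℝ) = ((n:ℝ) + (M:ℝ) + 1) * ((n + M).factorial : ℝ) := by
    rw [add_right_comm n 1 M, Nat.factorial_succ]
    push_cast; ring
  have hsplit : ‖F (n+1)‖ = (|t| * ((n:ℝ) + (M:ℝ) + 1) ^ s / (R * ((n:ℝ)+1))) * ‖F n‖ := by
    rw [habs, habs, hfac, Real.mul_rpow (by positivity) (by positivity), Nat.factorial_succ]
    push_cast
    have h1 : (0:ℝ) < (((n + M).factorial : ℝ)) ^ s := rpow_pos_of_pos (by positivity) s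
    have h2 : (0:ℝ) < ((n:ℝ) + (M:ℝ) + 1) ^ s := rpow_pos_of_pos (by positivity) s
    have h3 : (0:ℝ) < (n.factorial : ℝ) := by positivity
    field_simp
    ring
  rw [hsplit]
  have hb : |t| * ((n:ℝ) + (M:ℝ) + 1) ^ s / (R * ((n:ℝ)+1)) ≤
      (|t| * ((M:ℝ)+1) ^ s / R) * ((n:ℝ)+1) ^ (-(1-s)) := by
    have h4 : ((n:ℝ) + (M:ℝ) + 1) ^ s ≤ ((M:ℝ)+1) ^ s * ((n:ℝ)+1) ^ s := by
      rw [← Real.mul_rpow (by positivity) (by positivity)]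
      apply Real.rpow_le_rpow (by positivity) (by nlinarith [Nat.cast_nonneg' (α := ℝ) n, Nat.cast_nonneg' (α := ℝ) M]) hs0.le
    have h5 : ((n:ℝ)+1) ^ (-(1-s)) = ((n:ℝ)+1) ^ s / ((n:ℝ)+1) := by
      rw [show -(1-s) = s - 1 by ring, Real.rpow_sub hnp, Real.rpow_one]
    rw [h5]
    rw [div_le_iff₀ (by positivity)] at *
    calc |t| * ((n:ℝ) + (M:ℝ) + 1) ^ s ≤ |t| * (((M:ℝ)+1) ^ s * ((n:ℝ)+1) ^ s) := by
          apply mul_le_mul_of_nonneg_left h4 (abs_nonneg t)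
      _ = |t| * ((M:ℝ)+1) ^ s / R * (((n:ℝ)+1) ^ s / ((n:ℝ)+1)) * (R * ((n:ℝ)+1)) := by
          field_simp
  calc (|t| * ((n:ℝ) + (M:ℝ) + 1) ^ s / (R * ((n:ℝ)+1))) * ‖F n‖
      ≤ ((|t| * ((M:ℝ)+1) ^ s / R) * ((n:ℝ)+1) ^ (-(1-s))) * ‖F n‖ := by
        apply mul_le_mul_of_nonneg_right hb (norm_nonneg _)
    _ ≤ (1/2) * ‖F n‖ := by apply mul_le_mul_of_nonneg_right hn (norm_nonneg _)

private lemma fact_add_le (n m : ℕ) :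
    ((n + m).factorial : ℝ) ≤ 2 ^ (n + m) * ((n.factorial : ℝ) * (m.factorial : ℝ)) := by
  have h1 : (n+m).choose n * n.factorial * ((n+m) - n).factorial = (n+m).factorial :=
    Nat.choose_mul_factorial_mul_factorial (Nat.le_add_right n m)
  have h2 : (n+m).choose n ≤ 2 ^ (n+m) := by
    calc (n+m).choose n ≤ ∑ i ∈ Finset.range (n+m+1), (n+m).choose i :=
          Finset.single_le_sum (fun i _ => Nat.zero_le _) (Finset.mem_range.mpr (by omega))
      _ = 2 ^ (n+m) := Nat.sum_range_choose (n+m)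
  have h3 : (n+m).factorial ≤ 2 ^ (n+m) * (n.factorial * m.factorial) := by
    have := Nat.mul_le_mul_right (n.factorial * ((n+m)-n).factorial) h2
    simp only [Nat.add_sub_cancel_left] at h1 ⊢
    calc (n+m).factorial = (n+m).choose n * n.factorial * m.factorial := by
          rw [h1]
      _ ≤ 2^(n+m) * n.factorial * m.factorial := by
          exact Nat.mul_le_mul_right _ (Nat.mul_le_mul_right _ h2)
      _ = 2^(n+m) * (n.factorial * m.factorial) := by ring
  exact_mod_cast h3

set_option maxHeartbeats 1000000 in
theorem stmt17 (s : ℝ) (hs0 : 0 < s) (hs1 : s < 1) (a : ℕ → ℝ) (C R : ℝ)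
    (hC : 0 < C) (hR : 0 < R)
    (ha : ∀ n : ℕ, |a n| ≤ C * (Nat.factorial n : ℝ) ^ s / R ^ n)
    (f : ℝ → ℝ)
    (hf : ∀ x : ℝ, HasSum (fun n : ℕ => a n * x ^ n / (Nat.factorial n : ℝ)) (f x)) :
    AnalyticOnNhd ℝ f Set.univ ∧
      ∀ l : ℝ, 0 < l → ∀ m : ℕ, ∀ x ∈ Set.Icc (-l) l,
        |iteratedDeriv m f x| ≤
          C * (∑' k : ℕ, ((2 : ℝ) ^ s * l) ^ k /
                (R ^ k * (Nat.factorial k : ℝ) ^ (1 - s))) *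
            ((2 : ℝ) ^ (s * (m : ℝ)) / R ^ m) * (Nat.factorial m : ℝ) ^ s := by
  -- the `m`-th derivative candidates
  set g : ℕ → ℝ → ℝ := fun m x => ∑' n : ℕ, a (n + m) * x ^ n / ((n.factorial : ℝ)) with hg
  have hterm : ∀ (m n : ℕ) (x : ℝ), |a (n + m) * x ^ n / ((n.factorial : ℝ))| ≤
      (C / R ^ m) * (|x| ^ n * (((n + m).factorial : ℝ)) ^ s / (R ^ n * (n.factorial : ℝ))) := by
    intro m n x
    have hfp : (0:ℝ) < (n.factorial : ℝ) := by positivity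
    rw [abs_div, abs_mul, abs_pow, abs_of_pos hfp]
    have h1 : |a (n + m)| * |x| ^ n / (n.factorial : ℝ) ≤
        (C * (((n + m).factorial : ℝ)) ^ s / R ^ (n + m)) * |x| ^ n / (n.factorial : ℝ) := by
      gcongr
      exact ha (n + m)
    refine h1.trans_eq ?_
    rw [pow_add]
    field_simp
  have hsummable : ∀ (m : ℕ) (x : ℝ), Summable (fun n : ℕ => a (n + m) * x ^ n / ((n.factorial : ℝ))) := by
    intro m x
    apply Summable.of_norm
    apply Summable.of_nonneg_of_le (fun n => norm_nonneg _) (fun n => hterm m n x)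
    exact ((aux_summable hs0 hs1 hR m |x|).mul_left (C / R ^ m))
  have hg0 : ∀ x, g 0 x = f x := by
    intro x
    simp only [hg, add_zero]
    exact (hf x).tsum_eq
  -- termwise differentiation
  have hderiv : ∀ (m : ℕ) (x : ℝ), HasDerivAt (g m) (g (m + 1) x) x := by
    intro m x
    set r : ℝ := |x| + 1 with hr
    have hrpos : (0:ℝ) < r := by positivity
    set φ' : ℕ → ℝ → ℝ := fun n y => a (n + m) * ((n : ℝ) * y ^ (n - 1)) / ((n.factorial : ℝ)) with hφ'
    set u : ℕ → ℝ := fun n => (C / R ^ m) * ((n : ℝ) * (((n + m).factorial : ℝ)) ^ s * r ^ (n - 1) / (R ^ n * (n.factorial : ℝ))) with hu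
    have hu_succ : ∀ n : ℕ, u (n + 1) =
        (C / R ^ (m + 1)) * (r ^ n * (((n + (m + 1)).factorial : ℝ)) ^ s / (R ^ n * (n.factorial : ℝ))) := by
      intro n
      have hidx : n + 1 + m = n + (m + 1) := by omega
      simp only [hu, hidx, Nat.add_sub_cancel]
      rw [Nat.factorial_succ, pow_succ, pow_succ]
      have h3 : (0:ℝ) < (n.factorial : ℝ) := by positivity
      push_cast
      field_simp
    have husum : Summable u := by
      rw [← summable_nat_add_iff 1]
      apply Summable.congr (((aux_summable hs0 hs1 hR (m + 1) r).mul_left (C / R ^ (m + 1))))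
      intro n
      rw [hu_succ n]
    have hφderiv : ∀ (n : ℕ), ∀ y ∈ Metric.ball (0:ℝ) r, HasDerivAt (fun z => a (n + m) * z ^ n / ((n.factorial : ℝ))) (φ' n y) y := by
      intro n y _
      exact ((hasDerivAt_pow n y).const_mul (a (n + m))).div_const _
    have hφbound : ∀ (n : ℕ) (y : ℝ), y ∈ Metric.ball (0:ℝ) r → ‖φ' n y‖ ≤ u n := by
      intro n y hy
      rw [Metric.mem_ball, dist_zero_right, Real.norm_eq_abs] at hy
      have hfp : (0:ℝ) < (n.factorial : ℝ) := by positivity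
      have : ‖φ' n y‖ = |a (n + m)| * ((n : ℝ) * |y| ^ (n - 1)) / ((n.factorial : ℝ)) := by
        rw [hφ', Real.norm_eq_abs, abs_div, abs_mul, abs_mul, abs_pow,
          Nat.abs_cast, abs_of_pos hfp]
      rw [this]
      have h2 : |a (n + m)| * ((n : ℝ) * |y| ^ (n - 1)) / ((n.factorial : ℝ)) ≤
          (C * (((n + m).factorial : ℝ)) ^ s / R ^ (n + m)) * ((n : ℝ) * r ^ (n - 1)) / ((n.factorial : ℝ)) := by
        gcongr
        exact ha (n + m)
      refine h2.trans_eq ?_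
      rw [hu, pow_add]
      field_simp
    have hmain := hasDerivAt_tsum_of_isPreconnected husum Metric.isOpen_ball
      (convex_ball (0:ℝ) r).isPreconnected hφderiv hφbound
      (Metric.mem_ball_self hrpos) (hsummable m 0)
      (by rw [Metric.mem_ball, dist_zero_right, Real.norm_eq_abs]; linarith : x ∈ Metric.ball (0:ℝ) r)
    have hsum' : Summable (fun n => φ' n x) := by
      apply Summable.of_norm
      apply Summable.of_nonneg_of_le (fun n => norm_nonneg _)
        (fun n => hφbound n x (by rw [Metric.mem_ball, dist_zero_right, Real.norm_eq_abs]; linarith))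
      exact husum
    have hshift : (∑' n, φ' n x) = g (m + 1) x := by
      rw [Summable.tsum_eq_zero_add hsum']
      have h0 : φ' 0 x = 0 := by simp [hφ']
      rw [h0, zero_add, hg]
      apply tsum_congr
      intro k
      have hidx : k + 1 + m = k + (m + 1) := by omega
      simp only [hφ', hidx, Nat.add_sub_cancel]
      rw [Nat.factorial_succ]
      have h3 : (0:ℝ) < (k.factorial : ℝ) := by positivity
      push_cast
      field_simp
    rw [← hshift]
    exact hmain
  have hiter : ∀ m : ℕ, iteratedDeriv m f = g m := by
    intro m
    induction m with
    | zero => funext x; rw [iteratedDeriv_zero]; exact (hg0 x).symm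
    | succ m ih =>
      funext x
      rw [iteratedDeriv_succ, ih]
      exact (hderiv m x).deriv
  constructor
  · -- analyticity
    set p := FormalMultilinearSeries.ofScalars ℝ (fun n => a n / ((n.factorial : ℝ))) with hp
    have hnorm : ∀ n : ℕ, ‖p n‖ = |a n / ((n.factorial : ℝ))| := fun n => by
      rw [hp, FormalMultilinearSeries.ofScalars_norm, Real.norm_eq_abs]
    have hradius : p.radius = ⊤ := by
      apply p.radius_eq_top_of_summable_norm
      intro r
      apply Summable.of_nonneg_of_le (fun n => by positivity)
        (fun n => ?_) (((aux_summable hs0 hs1 hR 0 (r:ℝ)).mul_left C))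
      rw [hnorm n]
      have hfp : (0:ℝ) < (n.factorial : ℝ) := by positivity
      rw [abs_div, abs_of_pos hfp]
      have h1 : |a n| / (n.factorial : ℝ) * (r:ℝ) ^ n ≤
          (C * ((n.factorial : ℝ)) ^ s / R ^ n) / (n.factorial : ℝ) * (r:ℝ) ^ n := by
        gcongr
        exact ha n
      refine h1.trans_eq ?_
      simp only [add_zero]
      field_simp
    have hball : HasFPowerSeriesOnBall f p 0 ⊤ := by
      refine ⟨by rw [hradius], by simp, ?_⟩
      intro y _
      have := hf y
      rw [zero_add]
      convert this using 2 with n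
      rfl
      rw [hp, FormalMultilinearSeries.ofScalars_apply_eq, smul_eq_mul]
      ring
    have huniv : Metric.eball (0:ℝ) ⊤ = Set.univ :=
      Set.eq_univ_of_forall (fun y => Metric.mem_eball.mpr (edist_lt_top _ _))
    have := hball.analyticOnNhd
    rwa [huniv] at this
  · -- Gevrey bound
    intro l hl m x hx
    have hxl : |x| ≤ l := abs_le.mpr ⟨hx.1, hx.2⟩
    rw [hiter m]
    set v : ℕ → ℝ := fun k => ((2:ℝ) ^ s * l) ^ k / (R ^ k * ((k.factorial : ℝ)) ^ (1 - s)) with hv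
    set D : ℝ := C * ((2:ℝ) ^ s) ^ m * ((m.factorial : ℝ)) ^ s / R ^ m with hD
    have hv_eq : ∀ n : ℕ, v n = ((2:ℝ) ^ s * l) ^ n * (((n + 0).factorial : ℝ)) ^ s / (R ^ n * (n.factorial : ℝ)) := by
      intro n
      have hfp : (0:ℝ) < (n.factorial : ℝ) := by positivity
      have hsp : (0:ℝ) < ((n.factorial : ℝ)) ^ s := Real.rpow_pos_of_pos hfp _
      simp only [hv, add_zero]
      rw [Real.rpow_sub hfp, Real.rpow_one]
      field_simp
    have hsv : Summable v := by
      apply Summable.congr (aux_summable hs0 hs1 hR 0 ((2:ℝ) ^ s * l))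
      intro n
      rw [hv_eq n]
    have hkey : ∀ n : ℕ, |a (n + m) * x ^ n / ((n.factorial : ℝ))| ≤ D * v n := by
      intro n
      have step0 : |a (n + m) * x ^ n / ((n.factorial : ℝ))| ≤
          (C / R ^ m) * (l ^ n * (((n + m).factorial : ℝ)) ^ s / (R ^ n * (n.factorial : ℝ))) := by
        refine (hterm m n x).trans ?_
        gcongr
      refine step0.trans ?_
      · -- apply the factorial bound
        have hf1 : (((n + m).factorial : ℝ)) ^ s ≤ ((2:ℝ) ^ s) ^ (n + m) * (((n.factorial : ℝ)) ^ s * ((m.factorial : ℝ)) ^ s) := by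
          have h1 := Real.rpow_le_rpow (by positivity) (fact_add_le n m) hs0.le
          rw [Real.mul_rpow (by positivity) (by positivity),
            Real.mul_rpow (by positivity) (by positivity)] at h1
          have h2 : ((2:ℝ) ^ (n + m)) ^ s = ((2:ℝ) ^ s) ^ (n + m) := by
            rw [← Real.rpow_natCast 2 (n + m), ← Real.rpow_mul (by norm_num),
              mul_comm, Real.rpow_mul (by norm_num), Real.rpow_natCast]
          rwa [h2] at h1
        have step : (C / R ^ m) * (l ^ n * (((n + m).factorial : ℝ)) ^ s / (R ^ n * (n.factorial : ℝ))) ≤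
            (C / R ^ m) * (l ^ n * (((2:ℝ) ^ s) ^ (n + m) * (((n.factorial : ℝ)) ^ s * ((m.factorial : ℝ)) ^ s)) / (R ^ n * (n.factorial : ℝ))) := by
          gcongr
        refine step.trans_eq ?_
        have hfp : (0:ℝ) < (n.factorial : ℝ) := by positivity
        have hsp : (0:ℝ) < ((n.factorial : ℝ)) ^ s := Real.rpow_pos_of_pos hfp _
        simp only [hD, hv]
        rw [Real.rpow_sub hfp, Real.rpow_one, pow_add, mul_pow]
        field_simp
    have hsum_abs : Summable (fun n => |a (n + m) * x ^ n / ((n.factorial : ℝ))|) :=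
      (hsummable m x).abs
    have habs : |g m x| ≤ D * ∑' n, v n := by
      have h1 : |g m x| ≤ ∑' n, |a (n + m) * x ^ n / ((n.factorial : ℝ))| := by
        have h0 := norm_tsum_le_tsum_norm (f := fun n : ℕ => a (n + m) * x ^ n / ((n.factorial : ℝ)))
          (by simpa only [Real.norm_eq_abs] using hsum_abs)
        simp only [Real.norm_eq_abs] at h0
        simpa only [hg] using h0
      refine h1.trans ?_
      refine (Summable.tsum_le_tsum (fun n => hkey n) hsum_abs (hsv.mul_left D)).trans_eq ?_
      exact tsum_mul_left
    have h2m : (2:ℝ) ^ (s * (m : ℝ)) = ((2:ℝ) ^ s) ^ m := by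
      rw [Real.rpow_mul (by norm_num), Real.rpow_natCast]
    have hfinal : C * (∑' k, v k) * ((2:ℝ) ^ (s * (m : ℝ)) / R ^ m) * ((m.factorial : ℝ)) ^ s = D * ∑' n, v n := by
      rw [h2m, hD]
      ring
    linarith [habs, hfinal]
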